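/- Let M > 0 and let q(x) = T_n(x) + Σ_{k=0}^{n−1} c_k T_k(x) with |c_k| ≤ 2M for all k, where T_k are Chebyshev polynomials of the first kind. Write q(x) = Σ_{j=0}^n d_j x^j. Then there exist constants B > 0 and b > 1 depending only on M such that max_{0 ≤ j ≤ n} |d_j| ≥ B (2b)^n / (n+1) for all n. -/

import Mathlib

open Polynomial

private lemma cheb_natDegree_le : ∀ n : ℕ, (Polynomial.Chebyshev.T ℝ (n : ℤ)).natDegree ≤ n := by
  intro n
  induction n using Nat.strong_induction_on with
  | _ n ih =>
    match n with
    | 0 => simp [Polynomial.Chebyshev.T_zero]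
    | 1 => simp [Polynomial.Chebyshev.T_one]
    | (m+2) =>
      have hcast : ((m+2 : ℕ) : ℤ) = (m : ℤ) + 2 := by push_cast; ring
      rw [hcast, Polynomial.Chebyshev.T_add_two]
      have h1 : ((m : ℤ) + 1) = ((m+1 : ℕ) : ℤ) := by push_cast; ring
      have hA : (2 * X * Polynomial.Chebyshev.T ℝ ((m:ℤ)+1)).natDegree ≤ m + 2 := by
        refine le_trans (natDegree_mul_le) ?_
        have h2 : ((2 : ℝ[X]) * X).natDegree ≤ 1 :=
          le_trans natDegree_mul_le (by simp)
        have h3 := ih (m+1) (by omega)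
        rw [h1]
        omega
      have hB : (Polynomial.Chebyshev.T ℝ (m:ℤ)).natDegree ≤ m + 2 :=
        le_trans (ih m (by omega)) (by omega)
      exact le_trans (natDegree_sub_le _ _) (by omega)

private lemma sqrt_helper_le (a b C S : ℝ) (hpyth : b ^ 2 + a ^ 2 = 1)
    (hCS : C ^ 2 - S ^ 2 = 1) (hC : 0 < C) :
    Real.sqrt ((a * C) ^ 2 + (b * S) ^ 2) ≤ C := by
  have h1 : (a * C) ^ 2 + (b * S) ^ 2 ≤ C ^ 2 := by
    nlinarith [sq_nonneg a, sq_nonneg b, sq_nonneg S]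
  calc Real.sqrt ((a * C) ^ 2 + (b * S) ^ 2) ≤ Real.sqrt (C ^ 2) := Real.sqrt_le_sqrt h1
    _ = C := Real.sqrt_sq hC.le

private lemma sqrt_helper_ge (a b C S : ℝ) (hpyth : b ^ 2 + a ^ 2 = 1)
    (hCS : C ^ 2 - S ^ 2 = 1) (hS : 0 ≤ S) :
    S ≤ Real.sqrt ((a * C) ^ 2 + (b * S) ^ 2) := by
  refine Real.le_sqrt_of_sq_le ?_
  nlinarith [sq_nonneg a, sq_nonneg b]

private lemma cheb_eval_eq (s : ℝ) (k : ℕ) :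
    (Polynomial.Chebyshev.T ℂ (k : ℤ)).eval ((Real.sinh s : ℂ) * Complex.I)
      = ((Real.cos (k * (Real.pi/2)) * Real.cosh (k*s) : ℝ) : ℂ) +
        ((Real.sin (k * (Real.pi/2)) * Real.sinh (k*s) : ℝ) : ℂ) * Complex.I := by
  have hθ : ((Real.sinh s : ℂ) * Complex.I)
      = Complex.cos (((Real.pi/2 : ℝ) : ℂ) - (s : ℂ) * Complex.I) := by
    rw [Complex.cos_sub, Complex.cos_mul_I, Complex.sin_mul_I,
      ← Complex.ofReal_cos, ← Complex.ofReal_sin, Real.cos_pi_div_two, Real.sin_pi_div_two,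
      ← Complex.ofReal_sinh]
    push_cast
    ring
  rw [hθ, Polynomial.Chebyshev.T_complex_cos]
  have h2 : ((k : ℤ) : ℂ) * (((Real.pi/2 : ℝ) : ℂ) - (s : ℂ) * Complex.I)
      = ((k * (Real.pi/2) : ℝ) : ℂ) - ((k * s : ℝ) : ℂ) * Complex.I := by
    push_cast; ring
  rw [h2, Complex.cos_sub, Complex.cos_mul_I, Complex.sin_mul_I,
    ← Complex.ofReal_cos, ← Complex.ofReal_sin, ← Complex.ofReal_cosh, ← Complex.ofReal_sinh]
  push_cast
  ring

private lemma cheb_abs_le (s : ℝ) (k : ℕ) :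
    ‖((Polynomial.Chebyshev.T ℂ (k : ℤ)).eval ((Real.sinh s : ℂ) * Complex.I))‖
      ≤ Real.cosh (k * s) := by
  rw [cheb_eval_eq, Complex.norm_add_mul_I]
  exact sqrt_helper_le _ _ _ _ (Real.sin_sq_add_cos_sq _) (Real.cosh_sq_sub_sinh_sq _)
    (Real.cosh_pos _)

private lemma cheb_abs_ge (s : ℝ) (hs : 0 ≤ s) (k : ℕ) :
    Real.sinh (k * s)
      ≤ ‖((Polynomial.Chebyshev.T ℂ (k : ℤ)).eval ((Real.sinh s : ℂ) * Complex.I))‖ := by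
  rw [cheb_eval_eq, Complex.norm_add_mul_I]
  exact sqrt_helper_ge _ _ _ _ (Real.sin_sq_add_cos_sq _) (Real.cosh_sq_sub_sinh_sq _)
    (Real.sinh_nonneg_iff.mpr (by positivity))

theorem no_cancellation_coeff_growth (M : ℝ) (hM : 0 < M) :
    ∃ B > (0 : ℝ), ∃ b > (1 : ℝ), ∀ n : ℕ, ∀ c : ℕ → ℝ,
      (∀ k < n, |c k| ≤ 2 * M) →
      ∀ q : ℝ[X],
        q = Polynomial.Chebyshev.T ℝ n +
              ∑ k ∈ Finset.range n, Polynomial.C (c k) * Polynomial.Chebyshev.T ℝ k →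
        ∃ j ≤ n, B * (2 * b) ^ n / (n + 1) ≤ |q.coeff j| := by
  set E : ℝ := 16 * M + 4 with hEdef
  have hE4 : 4 ≤ E := by linarith
  have hE0 : (0 : ℝ) < E := by linarith
  set s : ℝ := Real.log E with hsdef
  have hexp : Real.exp s = E := Real.exp_log hE0
  have hs0 : 0 ≤ s := Real.log_nonneg (by linarith)
  set t : ℝ := Real.sinh s with htdef
  have hEinv : E⁻¹ ≤ 1 := by
    rw [inv_le_one_iff₀]; right; linarith
  have hEinv0 : 0 < E⁻¹ := by positivity
  have ht : t = (E - E⁻¹) / 2 := by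
    rw [htdef, Real.sinh_eq, hexp, Real.exp_neg, hexp]
  have ht1 : 1 ≤ t := by rw [ht]; linarith
  have ht0 : 0 < t := by linarith
  have htE : 2 * t < E := by rw [ht]; linarith
  refine ⟨1/4, by norm_num, E / (2 * t), (one_lt_div (by positivity)).mpr htE, ?_⟩
  intro n c hc q hq
  have h2b : 2 * (E / (2 * t)) = E / t := by
    rw [eq_div_iff (ne_of_gt ht0)]
    field_simp
  rcases Nat.eq_zero_or_pos n with hn0 | hn1
  · subst hn0
    refine ⟨0, le_refl _, ?_⟩
    have hq1 : q = 1 := by simpa [Polynomial.Chebyshev.T_zero] using hq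
    rw [hq1]
    norm_num
  by_contra hcon
  push_neg at hcon
  rw [h2b] at hcon
  set z : ℂ := (t : ℂ) * Complex.I with hzdef
  set qc : ℂ[X] := q.map (algebraMap ℝ ℂ) with hqcdef
  have hqc : qc = Polynomial.Chebyshev.T ℂ n +
      ∑ k ∈ Finset.range n, Polynomial.C ((c k : ℂ)) * Polynomial.Chebyshev.T ℂ k := by
    rw [hqcdef, hq]
    simp [Polynomial.map_add, Polynomial.map_sum, Polynomial.map_mul,
      Polynomial.map_C, Polynomial.Chebyshev.map_T]
  have hcosh_le : ∀ k : ℕ, Real.cosh ((k:ℝ) * s) ≤ E ^ k := by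
    intro k
    rw [Real.cosh_eq]
    have hks : (0:ℝ) ≤ (k:ℝ) * s := by positivity
    have h9 : Real.exp (-((k:ℝ) * s)) ≤ Real.exp ((k:ℝ) * s) :=
      Real.exp_le_exp.mpr (by linarith)
    have h10 : Real.exp ((k:ℝ) * s) = E ^ k := by rw [Real.exp_nat_mul, hexp]
    rw [← h10]
    linarith
  have habs_T : ∀ k : ℕ, ‖((Polynomial.Chebyshev.T ℂ (k:ℤ)).eval z)‖ ≤ E ^ k := by
    intro k
    rw [hzdef, htdef]
    exact le_trans (cheb_abs_le s k) (hcosh_le k)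
  have habs_Tn : Real.sinh (n * s) ≤ ‖((Polynomial.Chebyshev.T ℂ (n:ℤ)).eval z)‖ := by
    rw [hzdef, htdef]; exact cheb_abs_ge s hs0 n
  have hsum_le : ‖((∑ k ∈ Finset.range n,
      Polynomial.C ((c k : ℂ)) * Polynomial.Chebyshev.T ℂ k).eval z)‖ ≤ E ^ n / 8 := by
    rw [Polynomial.eval_finset_sum]
    refine le_trans (norm_sum_le _ _) ?_
    have hstep : ∀ k ∈ Finset.range n,
        ‖((Polynomial.C ((c k : ℂ)) * Polynomial.Chebyshev.T ℂ k).eval z)‖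
          ≤ 2 * M * E ^ k := by
      intro k hk
      rw [Polynomial.eval_mul, Polynomial.eval_C, norm_mul, Complex.norm_real, Real.norm_eq_abs]
      exact mul_le_mul (hc k (Finset.mem_range.mp hk)) (habs_T k)
        (norm_nonneg _) (by linarith)
    refine le_trans (Finset.sum_le_sum hstep) ?_
    rw [← Finset.mul_sum]
    have hgeom : ∑ k ∈ Finset.range n, E ^ k = (E ^ n - 1) / (E - 1) :=
      geom_sum_eq (by linarith) n
    rw [hgeom]
    have hEn1 : (1:ℝ) ≤ E ^ n := one_le_pow₀ (by linarith)
    have hd1 : (E ^ n - 1) / (E - 1) ≤ E ^ n / (16 * M) :=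
      div_le_div₀ (by positivity) (by linarith) (by positivity) (by linarith)
    have hd2 : 2 * M * (E ^ n / (16 * M)) = E ^ n / 8 := by
      field_simp
      ring
    calc 2 * M * ((E ^ n - 1) / (E - 1)) ≤ 2 * M * (E ^ n / (16 * M)) := by
          exact mul_le_mul_of_nonneg_left hd1 (by linarith)
      _ = E ^ n / 8 := hd2
  have hlow : E ^ n / 4 ≤ ‖(qc.eval z)‖ := by
    have hEn4 : 4 ≤ E ^ n := le_trans hE4 (le_self_pow₀ (by linarith) (by omega))
    have hsinh : (E ^ n - 1) / 2 ≤ Real.sinh (n * s) := by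
      rw [Real.sinh_eq, Real.exp_nat_mul, hexp]
      have h9 : Real.exp (-((n:ℝ) * s)) ≤ 1 := by
        rw [Real.exp_le_one_iff]
        have : (0:ℝ) ≤ (n:ℝ) * s := by positivity
        linarith
      linarith
    have hsplit : (Polynomial.Chebyshev.T ℂ (n:ℤ)).eval z
        = qc.eval z - (∑ k ∈ Finset.range n,
            Polynomial.C ((c k : ℂ)) * Polynomial.Chebyshev.T ℂ k).eval z := by
      rw [hqc, Polynomial.eval_add]; ring
    have htri : ‖((Polynomial.Chebyshev.T ℂ (n:ℤ)).eval z)‖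
        ≤ ‖(qc.eval z)‖ + E ^ n / 8 := by
      rw [hsplit]
      have habs_sub : ∀ A B : ℂ, ‖(A - B)‖ ≤ ‖A‖ + ‖B‖ := by
        intro A B
        simpa [sub_eq_add_neg] using norm_add_le A (-B)
      exact le_trans (habs_sub _ _) (by linarith)
    have := le_trans hsinh (le_trans habs_Tn htri)
    linarith
  have hdegq : q.natDegree ≤ n := by
    rw [hq]
    refine le_trans (natDegree_add_le _ _) ?_
    refine max_le (cheb_natDegree_le n) ?_
    refine natDegree_sum_le_of_forall_le _ _ ?_
    intro k hk
    have hk' : k < n := Finset.mem_range.mp hk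
    refine le_trans natDegree_mul_le ?_
    have hTk : (Polynomial.Chebyshev.T ℝ (k:ℤ)).natDegree ≤ k := cheb_natDegree_le k
    simp only [natDegree_C, zero_add]
    omega
  have hdegqc : qc.natDegree < n + 1 :=
    lt_of_le_of_lt (le_trans (natDegree_map_le) hdegq) (by omega)
  have hup : ‖(qc.eval z)‖ ≤ ∑ j ∈ Finset.range (n+1), |q.coeff j| * t ^ j := by
    rw [eval_eq_sum_range' hdegqc z]
    refine le_trans (norm_sum_le _ _) ?_
    refine Finset.sum_le_sum ?_
    intro j hj
    rw [hqcdef, Polynomial.coeff_map, norm_mul, norm_pow]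
    have h1 : ‖(algebraMap ℝ ℂ (q.coeff j))‖ = |q.coeff j| := (Complex.norm_real _).trans (Real.norm_eq_abs _)
    have h2 : ‖z‖ = t := by
      rw [hzdef, norm_mul, Complex.norm_I, Complex.norm_real, Real.norm_eq_abs, mul_one, abs_of_pos ht0]
    rw [h1, h2]
  set K : ℝ := 1/4 * (E / t) ^ n / (n + 1) with hKdef
  have hK0 : 0 < K := by positivity
  have hsum_lt : ∑ j ∈ Finset.range (n+1), |q.coeff j| * t ^ j
      < ∑ j ∈ Finset.range (n+1), K * t ^ n := by
    refine Finset.sum_lt_sum_of_nonempty ⟨0, Finset.mem_range.mpr (by omega)⟩ ?_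
    intro j hj
    have hjn' : j ≤ n := Nat.lt_succ_iff.mp (Finset.mem_range.mp hj)
    have hcj := hcon j hjn'
    have htj : t ^ j ≤ t ^ n := pow_le_pow_right₀ ht1 hjn'
    have htn0 : (0:ℝ) < t ^ n := by positivity
    calc |q.coeff j| * t ^ j ≤ |q.coeff j| * t ^ n :=
          mul_le_mul_of_nonneg_left htj (abs_nonneg _)
      _ < K * t ^ n := mul_lt_mul_of_pos_right hcj htn0
  have hfinal : ∑ j ∈ Finset.range (n+1), K * t ^ n = E ^ n / 4 := by
    rw [Finset.sum_const, Finset.card_range, nsmul_eq_mul, hKdef]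
    have hEt : (E / t) ^ n * t ^ n = E ^ n := by
      rw [← mul_pow, div_mul_cancel₀ _ (ne_of_gt ht0)]
    have hn1' : (0:ℝ) < (n:ℝ) + 1 := by positivity
    field_simp
    push_cast; rw [mul_assoc, hEt]
  rw [hfinal] at hsum_lt
  have := lt_of_le_of_lt hup hsum_lt
  linarith
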